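/- Let X be a real Banach space with a semi-normalized Markushevich basis (e_i, e*_i), and let n = (n_k) be a strictly increasing sequence of positive integers. Suppose the basis is C_q-n-quasi-greedy (t = 1), and suppose there is M > 0 such that for every ε > 0, every s ∈ ℕ and every N ∈ ℕ there is a finite set B ⊆ ℕ with min B > N, |B| = s, and ‖∑_{i∈B} e_i‖ ≤ (1+ε)·M (this holds whenever some subsequence of (e_i) has a spreading model M-equivalent to the unit vector basis of c_0). Then the basis is K_q-quasi-greedy with K_q ≤ C_q + (C_q + 1)·α_2·M; that is, ‖P_A(x)‖ ≤ (C_q + (C_q + 1)·α_2·M)·‖x‖ for every x ∈ X and every greedy set A for x. -/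

import Mathlib

open Finset

/-- Coordinate projection `P_A x = ∑_{i ∈ A} e*_i(x) • e_i`. -/
noncomputable def proj {X : Type*} [NormedAddCommGroup X] [NormedSpace ℝ X]
    (e : ℕ → X) (f : ℕ → X →L[ℝ] ℝ) (A : Finset ℕ) (x : X) : X :=
  ∑ i ∈ A, f i x • e i

/-- `A` is a `t`-greedy set for `x`:
`min_{i ∈ A} |e*_i(x)| ≥ t · sup_{j ∉ A} |e*_j(x)|`. -/
def IsGreedySet {X : Type*} [NormedAddCommGroup X] [NormedSpace ℝ X]
    (f : ℕ → X →L[ℝ] ℝ) (t : ℝ) (x : X) (A : Finset ℕ) : Prop :=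
  ∀ i ∈ A, ∀ j ∉ A, t * |f j x| ≤ |f i x|

section Aux

variable {X : Type*} [NormedAddCommGroup X] [NormedSpace ℝ X]

lemma f_sum_smul (e : ℕ → X) (f : ℕ → X →L[ℝ] ℝ)
    (hbio : ∀ k i, f k (e i) = if k = i then 1 else 0)
    (c : ℕ → ℝ) (B : Finset ℕ) (j : ℕ) :
    f j (∑ i ∈ B, c i • e i) = if j ∈ B then c j else 0 := by
  rw [map_sum]
  simp only [map_smul, hbio, smul_eq_mul, mul_ite, mul_one, mul_zero]
  exact Finset.sum_ite_eq B j c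

lemma proj_norm_le (e : ℕ → X) (f : ℕ → X →L[ℝ] ℝ) (A : Finset ℕ) (z : X) :
    ‖proj e f A z‖ ≤ (∑ i ∈ A, ‖f i‖ * ‖e i‖) * ‖z‖ := by
  rw [proj, Finset.sum_mul]
  refine (norm_sum_le _ _).trans (Finset.sum_le_sum fun i _ => ?_)
  calc ‖f i z • e i‖ = ‖f i z‖ * ‖e i‖ := norm_smul _ _
    _ ≤ (‖f i‖ * ‖z‖) * ‖e i‖ :=
        mul_le_mul_of_nonneg_right ((f i).le_opNorm z) (norm_nonneg _)
    _ = ‖f i‖ * ‖e i‖ * ‖z‖ := by ring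

lemma proj_add (e : ℕ → X) (f : ℕ → X →L[ℝ] ℝ) (A : Finset ℕ) (u v : X) :
    proj e f A (u + v) = proj e f A u + proj e f A v := by
  simp [proj, add_smul, Finset.sum_add_distrib]

lemma abs_add_sign {r t : ℝ} (hr : r ≠ 0) (ht : 0 ≤ t) :
    |r + t * Real.sign r| = |r| + t := by
  rcases hr.lt_or_gt with h | h
  · rw [Real.sign_of_neg h, abs_of_neg h, abs_of_neg (by nlinarith)]; ring
  · rw [Real.sign_of_pos h, abs_of_pos h, abs_of_pos (by nlinarith)]; ring

lemma abs_sign_le_one (r : ℝ) : |Real.sign r| ≤ 1 := by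
  rcases lt_trichotomy r 0 with h | h | h
  · rw [Real.sign_of_neg h]; norm_num
  · simp [h, Real.sign_zero]
  · rw [Real.sign_of_pos h]; norm_num

end Aux

set_option maxHeartbeats 1600000

/-- If a `C`-`n`-quasi-greedy basis admits, for every `ε > 0`, arbitrarily
far-out finite sets `B` of any prescribed cardinality with
`‖∑_{i ∈ B} e_i‖ ≤ (1+ε)·M` (as happens when a subsequence has a spreading
model `M`-equivalent to the unit vector basis of `c₀`), then the basis is
quasi-greedy with constant at most `C + (C+1)·α₂·M`. -/
theorem stmt_7 {X : Type*} [NormedAddCommGroup X] [NormedSpace ℝ X] [CompleteSpace X]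
    (e : ℕ → X) (f : ℕ → X →L[ℝ] ℝ)
    (hdense : Dense (Submodule.span ℝ (Set.range e) : Set X))
    (hbio : ∀ k i, f k (e i) = if k = i then 1 else 0)
    (htotal : ∀ x : X, (∀ i, f i x = 0) → x = 0)
    (hb1 : BddAbove (Set.range fun i => ‖e i‖))
    (hb2 : BddAbove (Set.range fun i => ‖f i‖))
    (n : ℕ → ℕ) (hn : StrictMono n) (hnpos : ∀ k, 0 < n k)
    (C : ℝ)
    (hqg : ∀ (x : X) (A : Finset ℕ), IsGreedySet f 1 x A → (∃ k, A.card = n k) →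
      ‖proj e f A x‖ ≤ C * ‖x‖)
    (M : ℝ) (hM : 0 < M)
    (hc0 : ∀ ε : ℝ, 0 < ε → ∀ s N : ℕ, ∃ B : Finset ℕ,
      (∀ i ∈ B, N < i) ∧ B.card = s ∧ ‖∑ i ∈ B, e i‖ ≤ (1 + ε) * M) :
    ∀ (x : X) (A : Finset ℕ), IsGreedySet f 1 x A →
      ‖proj e f A x‖ ≤ (C + (C + 1) * (⨆ i, ‖f i‖) * M) * ‖x‖ := by
  intro x A hA
  set α₂ : ℝ := ⨆ i, ‖f i‖ with hα₂def
  have hfle : ∀ i, ‖f i‖ ≤ α₂ := fun i => le_ciSup hb2 i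
  have hα₂0 : (0 : ℝ) ≤ α₂ := (norm_nonneg _).trans (hfle 0)
  -- C ≥ 1
  have hC1 : (1 : ℝ) ≤ C := by
    set x₀ : X := ∑ i ∈ Finset.range (n 0), e i with hx₀def
    have hfx₀ : ∀ j, f j x₀ = if j ∈ Finset.range (n 0) then 1 else 0 := by
      intro j
      have h := f_sum_smul e f hbio (fun _ => (1 : ℝ)) (Finset.range (n 0)) j
      simpa [hx₀def] using h
    have hgr : IsGreedySet f 1 x₀ (Finset.range (n 0)) := by
      intro i hi j hj
      rw [hfx₀ i, hfx₀ j, if_pos hi, if_neg hj]; norm_num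
    have hproj : proj e f (Finset.range (n 0)) x₀ = x₀ := by
      rw [proj]
      exact Finset.sum_congr rfl fun i hi => by rw [hfx₀ i, if_pos hi, one_smul]
    have hx₀ne : x₀ ≠ 0 := by
      intro h
      have h0 : f 0 x₀ = 1 := by
        rw [hfx₀ 0, if_pos (Finset.mem_range.2 (hnpos 0))]
      rw [h] at h0; simp at h0
    have hq := hqg x₀ _ hgr ⟨0, Finset.card_range _⟩
    rw [hproj] at hq
    have hx₀pos : 0 < ‖x₀‖ := norm_pos_iff.2 hx₀ne
    nlinarith [hq, hx₀pos]
  have hK0 : (0 : ℝ) ≤ (C + 1) * α₂ * M :=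
    mul_nonneg (mul_nonneg (by linarith) hα₂0) hM.le
  have hK1 : (1 : ℝ) ≤ C + (C + 1) * α₂ * M := by linarith
  -- empty A
  rcases A.eq_empty_or_nonempty with rfl | hAne
  · simp only [proj, Finset.sum_empty, norm_zero]
    exact mul_nonneg (by linarith) (norm_nonneg x)
  -- a = min over A of |f i x|
  set a : ℝ := A.inf' hAne fun i => |f i x| with hadef
  obtain ⟨i₀, hi₀A, hi₀⟩ := Finset.exists_mem_eq_inf' hAne fun i => |f i x|
  have ha0 : 0 ≤ a := Finset.le_inf' hAne _ fun i _ => abs_nonneg _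
  have hja : ∀ j ∉ A, |f j x| ≤ a := by
    intro j hj
    have := hA i₀ hi₀A j hj
    rw [one_mul] at this
    rw [hadef, hi₀]; exact this
  rcases ha0.eq_or_lt with ha | hapos
  · -- degenerate case: all coefficients off A vanish, so x = proj A x
    have hi₀0 : f i₀ x = 0 := by
      have : |f i₀ x| = 0 := by rw [← hi₀, ← hadef, ← ha]
      exact abs_eq_zero.1 this
    have hoff : ∀ j ∉ A, f j x = 0 := by
      intro j hj
      have := hA i₀ hi₀A j hj
      rw [one_mul, hi₀0, abs_zero] at this
      exact abs_eq_zero.1 (le_antisymm this (abs_nonneg _))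
    have hxeq : proj e f A x = x := by
      have hz : ∀ k, f k (x - proj e f A x) = 0 := by
        intro k
        rw [map_sub]
        have hk : f k (proj e f A x) = if k ∈ A then f k x else 0 :=
          f_sum_smul e f hbio (fun i => f i x) A k
        by_cases hkA : k ∈ A
        · rw [hk, if_pos hkA, sub_self]
        · rw [hk, if_neg hkA, sub_zero]; exact hoff k hkA
      have := htotal _ hz
      have : x = proj e f A x := by
        have h := sub_eq_zero.1 this
        exact h
      exact this.symm
    rw [hxeq]
    nlinarith [norm_nonneg x]
  -- main case: a > 0
  refine le_of_forall_pos_le_add fun ε hε => ?_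
  set E : ℝ := ∑ i ∈ A, ‖e i‖ with hEdef
  have hE0 : 0 ≤ E := Finset.sum_nonneg fun i _ => norm_nonneg _
  set P : ℝ := ∑ i ∈ A, ‖f i‖ * ‖e i‖ with hPdef
  have hP0 : 0 ≤ P :=
    Finset.sum_nonneg fun i _ => mul_nonneg (norm_nonneg _) (norm_nonneg _)
  set Q : ℝ := (C + 1) * α₂ * M * (‖x‖ + 1) with hQdef
  have hQ0 : 0 ≤ Q := mul_nonneg hK0 (by nlinarith [norm_nonneg x])
  set ε₀ : ℝ := ε / (2 * (Q + 1)) with hε₀def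
  have hε₀ : 0 < ε₀ := div_pos hε (by linarith)
  set K₁ : ℝ := C + (C + 1) * (1 + ε₀) * α₂ * M with hK₁def
  have hK₁ge : C ≤ K₁ := by nlinarith [hε₀, hα₂0, hM, hC1]
  have hK₁1 : (1 : ℝ) ≤ K₁ := hC1.trans hK₁ge
  set dt : ℝ := min 1 (ε / (2 * (K₁ + P + 1))) with hdtdef
  have hdt0 : 0 < dt := lt_min one_pos (div_pos hε (by nlinarith))
  set δ : ℝ := dt / (2 * ((2 * α₂ + 1) * E + 1)) with hδdef
  have hδden : (0 : ℝ) < (2 * α₂ + 1) * E + 1 := by nlinarith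
  have hδ0 : 0 < δ := div_pos hdt0 (by linarith)
  set θ : ℝ := (2 * α₂ + 1) * δ with hθdef
  have hθ0 : 0 < θ := by nlinarith
  -- perturbed vector
  set x'' : X := x + ∑ i ∈ A, (θ * Real.sign (f i x)) • e i with hx''def
  have hfx'' : ∀ j, f j x'' = f j x + (if j ∈ A then θ * Real.sign (f j x) else 0) := by
    intro j
    rw [hx''def, map_add, f_sum_smul e f hbio _ A j]
  -- approximate by an element of the span
  obtain ⟨w, hwspan, hwdist⟩ := Metric.mem_closure_iff.1 (hdense x'') δ hδ0
  have hwnorm : ‖x'' - w‖ < δ := by rwa [← dist_eq_norm]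
  obtain ⟨c, hc⟩ := Finsupp.mem_span_range_iff_exists_finsupp.1 hwspan
  have hfw0 : ∀ j ∉ c.support, f j w = 0 := by
    intro j hj
    have : f j w = if j ∈ c.support then c j else 0 := by
      rw [← hc, Finsupp.sum]
      exact f_sum_smul e f hbio _ _ j
    rw [this, if_neg hj]
  -- coefficient estimates
  have hdiff : ∀ j, |f j w - f j x''| ≤ α₂ * δ := by
    intro j
    calc |f j w - f j x''| = ‖f j (w - x'')‖ := by rw [map_sub]; rfl
      _ ≤ ‖f j‖ * ‖w - x''‖ := (f j).le_opNorm _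
      _ ≤ α₂ * δ := by
          apply mul_le_mul (hfle j) _ (norm_nonneg _) hα₂0
          rw [norm_sub_rev]; exact hwnorm.le
  have hfiA : ∀ i ∈ A, a + α₂ * δ + δ ≤ |f i w| := by
    intro i hi
    have hne : f i x ≠ 0 := by
      intro h
      have : a ≤ |f i x| := Finset.inf'_le _ hi
      rw [h, abs_zero] at this; linarith
    have h1 : |f i x''| = |f i x| + θ := by
      rw [hfx'' i, if_pos hi]; exact abs_add_sign hne hθ0.le
    have h2 : a ≤ |f i x| := Finset.inf'_le _ hi
    have h3 := hdiff i
    have h4 : |f i x''| - |f i w| ≤ |f i x'' - f i w| := abs_sub_abs_le_abs_sub _ _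
    rw [abs_sub_comm] at h4
    have : |f i x''| - α₂ * δ ≤ |f i w| := by linarith
    rw [h1] at this
    rw [hθdef] at this
    linarith
  have hfjA : ∀ j ∉ A, |f j w| ≤ a + α₂ * δ := by
    intro j hj
    have h1 : f j x'' = f j x := by rw [hfx'' j, if_neg hj, add_zero]
    have h2 := hdiff j
    have h3 : |f j w| - |f j x''| ≤ |f j w - f j x''| := abs_sub_abs_le_abs_sub _ _
    have h4 := hja j hj
    rw [h1] at h3
    rw [h1] at h2
    linarith
  -- the min over A of |f i w|
  set aw : ℝ := A.inf' hAne fun i => |f i w| with hawdef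
  have haw_lb : a + α₂ * δ + δ ≤ aw := Finset.le_inf' hAne _ hfiA
  have haw_pos : 0 < aw := by linarith [mul_nonneg hα₂0 hδ0.le]
  have haw_le : aw ≤ α₂ * ‖w‖ := by
    calc aw ≤ |f i₀ w| := Finset.inf'_le _ hi₀A
      _ = ‖f i₀ w‖ := rfl
      _ ≤ ‖f i₀‖ * ‖w‖ := (f i₀).le_opNorm w
      _ ≤ α₂ * ‖w‖ := mul_le_mul_of_nonneg_right (hfle i₀) (norm_nonneg _)
  -- choose the far-out set B
  set N : ℕ := (A ∪ c.support).sup id with hNdef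
  obtain ⟨B, hBgt, hBcard, hBnorm⟩ := hc0 ε₀ hε₀ (n A.card - A.card) N
  have hBA : Disjoint A B := by
    rw [Finset.disjoint_left]
    intro i hiA hiB
    have h1 : i ≤ N := Finset.le_sup (f := id) (Finset.mem_union_left _ hiA)
    exact absurd (hBgt i hiB) (not_lt.2 h1)
  have hBsupp : ∀ i ∈ B, f i w = 0 := by
    intro i hiB
    apply hfw0
    intro hi
    have h1 : i ≤ N := Finset.le_sup (f := id) (Finset.mem_union_right _ hi)
    exact absurd (hBgt i hiB) (not_lt.2 h1)
  -- the vector y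
  set y : X := w + aw • ∑ i ∈ B, e i with hydef
  have hfy : ∀ j, f j y = f j w + (if j ∈ B then aw else 0) := by
    intro j
    rw [hydef, map_add, map_smul]
    have : f j (∑ i ∈ B, e i) = if j ∈ B then 1 else 0 := by
      have h := f_sum_smul e f hbio (fun _ => (1 : ℝ)) B j
      simpa using h
    rw [this]
    simp [mul_ite]
  have hfyB : ∀ j ∈ B, f j y = aw := by
    intro j hj
    rw [hfy j, hBsupp j hj, if_pos hj, zero_add]
  have hfyA : ∀ i ∈ A, f i y = f i w := by
    intro i hi
    rw [hfy i, if_neg (Finset.disjoint_left.1 hBA hi), add_zero]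
  -- A ∪ B is greedy for y
  have hgr_y : IsGreedySet f 1 y (A ∪ B) := by
    intro i hi j hj
    rw [one_mul]
    rw [Finset.mem_union] at hi
    rw [Finset.mem_union] at hj
    push_neg at hj
    obtain ⟨hjA, hjB⟩ := hj
    have hub : |f j y| ≤ aw := by
      rw [hfy j, if_neg hjB, add_zero]
      calc |f j w| ≤ a + α₂ * δ := hfjA j hjA
        _ ≤ aw := by linarith
    have hlb : aw ≤ |f i y| := by
      rcases hi with hiA | hiB
      · rw [hfyA i hiA]; exact Finset.inf'_le _ hiA
      · rw [hfyB i hiB, abs_of_pos haw_pos]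
    linarith
  have hcard : (A ∪ B).card = n A.card := by
    rw [Finset.card_union_of_disjoint hBA, hBcard]
    exact Nat.add_sub_cancel' hn.le_apply
  have hq := hqg y (A ∪ B) hgr_y ⟨A.card, hcard⟩
  -- split the projection
  have hsplit : proj e f (A ∪ B) y = proj e f A w + aw • ∑ i ∈ B, e i := by
    rw [proj, Finset.sum_union hBA, Finset.smul_sum]
    congr 1
    · exact Finset.sum_congr rfl fun i hi => by rw [hfyA i hi]
    · exact Finset.sum_congr rfl fun i hi => by rw [hfyB i hi]
  -- norm estimates
  have hBn0 : 0 ≤ ‖∑ i ∈ B, e i‖ := norm_nonneg _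
  have h1 : ‖proj e f A w‖ ≤ C * ‖y‖ + aw * ((1 + ε₀) * M) := by
    have heq : proj e f A w = proj e f (A ∪ B) y - aw • ∑ i ∈ B, e i := by
      rw [hsplit]; abel
    rw [heq]
    calc ‖proj e f (A ∪ B) y - aw • ∑ i ∈ B, e i‖
        ≤ ‖proj e f (A ∪ B) y‖ + ‖aw • ∑ i ∈ B, e i‖ := norm_sub_le _ _
      _ ≤ C * ‖y‖ + aw * ((1 + ε₀) * M) := by
          apply add_le_add hq
          rw [norm_smul, Real.norm_eq_abs, abs_of_pos haw_pos]
          exact mul_le_mul_of_nonneg_left hBnorm haw_pos.le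
  have h2 : ‖y‖ ≤ ‖w‖ + aw * ((1 + ε₀) * M) := by
    rw [hydef]
    calc ‖w + aw • ∑ i ∈ B, e i‖ ≤ ‖w‖ + ‖aw • ∑ i ∈ B, e i‖ := norm_add_le _ _
      _ ≤ ‖w‖ + aw * ((1 + ε₀) * M) := by
          apply add_le_add_right
          rw [norm_smul, Real.norm_eq_abs, abs_of_pos haw_pos]
          exact mul_le_mul_of_nonneg_left hBnorm haw_pos.le
  have h3 : ‖proj e f A w‖ ≤ K₁ * ‖w‖ := by
    have hcoef : (0 : ℝ) ≤ (C + 1) * ((1 + ε₀) * M) := by nlinarith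
    have hprod : aw * ((1 + ε₀) * M) ≤ α₂ * ‖w‖ * ((1 + ε₀) * M) :=
      mul_le_mul_of_nonneg_right haw_le (by nlinarith)
    calc ‖proj e f A w‖ ≤ C * ‖y‖ + aw * ((1 + ε₀) * M) := h1
      _ ≤ C * (‖w‖ + aw * ((1 + ε₀) * M)) + aw * ((1 + ε₀) * M) := by
          apply add_le_add_left
          exact mul_le_mul_of_nonneg_left h2 (by linarith)
      _ = C * ‖w‖ + (C + 1) * (aw * ((1 + ε₀) * M)) := by ring
      _ ≤ C * ‖w‖ + (C + 1) * (α₂ * ‖w‖ * ((1 + ε₀) * M)) := by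
          apply add_le_add_right
          exact mul_le_mul_of_nonneg_left hprod (by linarith)
      _ = K₁ * ‖w‖ := by rw [hK₁def]; ring
  -- distance estimates
  have hxx'' : ‖x - x''‖ ≤ θ * E := by
    rw [hx''def]
    have : x - (x + ∑ i ∈ A, (θ * Real.sign (f i x)) • e i)
        = -(∑ i ∈ A, (θ * Real.sign (f i x)) • e i) := by abel
    rw [this, norm_neg]
    calc ‖∑ i ∈ A, (θ * Real.sign (f i x)) • e i‖
        ≤ ∑ i ∈ A, ‖(θ * Real.sign (f i x)) • e i‖ := norm_sum_le _ _
      _ ≤ ∑ i ∈ A, θ * ‖e i‖ := by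
          apply Finset.sum_le_sum
          intro i _
          rw [norm_smul, Real.norm_eq_abs, abs_mul, abs_of_pos hθ0]
          apply mul_le_mul_of_nonneg_right _ (norm_nonneg _)
          nlinarith [abs_sign_le_one (f i x), hθ0]
      _ = θ * E := by rw [hEdef, Finset.mul_sum]
  have hd : ‖x - w‖ ≤ dt := by
    have hδval : ((2 * α₂ + 1) * E + 1) * δ = dt / 2 := by
      rw [hδdef]; field_simp
    calc ‖x - w‖ ≤ ‖x - x''‖ + ‖x'' - w‖ := by
          have : x - w = (x - x'') + (x'' - w) := by abel
          rw [this]; exact norm_add_le _ _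
      _ ≤ θ * E + δ := add_le_add hxx'' hwnorm.le
      _ = ((2 * α₂ + 1) * E + 1) * δ := by rw [hθdef]; ring
      _ = dt / 2 := hδval
      _ ≤ dt := by linarith
  -- assemble
  have hdec : proj e f A x = proj e f A w + proj e f A (x - w) := by
    rw [← proj_add, add_sub_cancel]
  have hfinal0 : ‖proj e f A x‖ ≤ K₁ * ‖x‖ + (K₁ + P) * dt := by
    calc ‖proj e f A x‖ ≤ ‖proj e f A w‖ + ‖proj e f A (x - w)‖ := by
          rw [hdec]; exact norm_add_le _ _
      _ ≤ K₁ * ‖w‖ + P * ‖x - w‖ := add_le_add h3 (proj_norm_le e f A (x - w))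
      _ ≤ K₁ * (‖x‖ + dt) + P * dt := by
          apply add_le_add
          · apply mul_le_mul_of_nonneg_left _ (by linarith)
            calc ‖w‖ ≤ ‖x‖ + ‖w - x‖ := by
                  have : w = x + (w - x) := by abel
                  nth_rewrite 1 [this]; exact norm_add_le _ _
              _ ≤ ‖x‖ + dt := by rw [norm_sub_rev]; linarith [hd]
          · exact mul_le_mul_of_nonneg_left hd hP0
      _ = K₁ * ‖x‖ + (K₁ + P) * dt := by ring
  -- bound the error terms by ε
  have herr1 : K₁ * ‖x‖ ≤ (C + (C + 1) * α₂ * M) * ‖x‖ + ε / 2 := by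
    have hεQ : ε₀ * (2 * (Q + 1)) = ε := by
      rw [hε₀def]; field_simp
    have hεQ2 : 2 * (ε₀ * Q) + 2 * ε₀ = ε := by rw [← hεQ]; ring
    have hεQle : ε₀ * Q ≤ ε / 2 := by linarith
    have hK₁x : K₁ * ‖x‖ = (C + (C + 1) * α₂ * M) * ‖x‖ + ε₀ * ((C + 1) * α₂ * M * ‖x‖) := by
      rw [hK₁def]; ring
    have hQx : (C + 1) * α₂ * M * ‖x‖ ≤ Q := by
      rw [hQdef]
      nlinarith [hK0, norm_nonneg x]
    have : ε₀ * ((C + 1) * α₂ * M * ‖x‖) ≤ ε₀ * Q :=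
      mul_le_mul_of_nonneg_left hQx hε₀.le
    linarith [hK₁x.le, hK₁x.ge]
  have herr2 : (K₁ + P) * dt ≤ ε / 2 := by
    have hdt2 : dt ≤ ε / (2 * (K₁ + P + 1)) := min_le_right _ _
    have hden : (0 : ℝ) < K₁ + P + 1 := by linarith
    calc (K₁ + P) * dt ≤ (K₁ + P + 1) * dt := by nlinarith [hdt0]
      _ ≤ (K₁ + P + 1) * (ε / (2 * (K₁ + P + 1))) :=
          mul_le_mul_of_nonneg_left hdt2 (by linarith)
      _ = ε / 2 := by field_simp
  refine hfinal0.trans ((add_le_add herr1 herr2).trans_eq ?_)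
  ring
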